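/- Let Z = {u_1 ≥ … ≥ u_m} be a multiset of nonnegative integers with u_i − u_{i+2} ≥ a for all i (where a > 0). Let δ_1,…,δ_m ∈ {0,1} with exactly l ones, and consider the multiset Z' = {u_i + δ_i a : 1 ≤ i ≤ m} with decreasing rearrangement z_1 ≥ … ≥ z_m. Then for all 1 ≤ d ≤ m: Σ_{i≤d} z_i ≤ min{d,l}·a + Σ_{i≤d} u_i. -/

import Mathlib

/-- Decreasing enumeration of a multiset of natural numbers. -/
def dsort (M : Multiset ℕ) : List ℕ := (M.sort (· ≤ ·)).reverse

open List Multiset in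
private lemma take_cons_sum_le {x : ℕ} {u : List ℕ} (hx : ∀ y ∈ u, y ≤ x) (k : ℕ) :
    (u.take k).sum ≤ ((x :: u).take k).sum := by
  cases k with
  | zero => simp
  | succ j =>
    rw [List.take_succ, List.take_succ_cons]
    simp only [List.sum_append, List.sum_cons]
    have : (u[j]?).toList.sum ≤ x := by
      cases h : u[j]? with
      | none => simp
      | some y => simpa using hx y (List.mem_of_getElem? h)
    have h2 : (u.take j).sum ≤ (u.take j).sum := le_rfl
    omega

open List in
private lemma sublist_sum_le_take {u s : List ℕ} (hu : List.Pairwise (· ≥ ·) u)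
    (hs : s <+ u) : s.sum ≤ (u.take s.length).sum := by
  induction u generalizing s with
  | nil => simp [List.sublist_nil.mp hs]
  | cons x t ih =>
    have hx : ∀ y ∈ t, y ≤ x := fun y hy => (List.pairwise_cons.1 hu).1 y hy
    cases hs with
    | cons _ h =>
      exact le_trans (ih (List.pairwise_cons.1 hu).2 h) (take_cons_sum_le hx _)
    | cons_cons _ h =>
      simp only [List.length_cons, List.take_succ_cons, List.sum_cons]
      exact Nat.add_le_add_left (ih (List.pairwise_cons.1 hu).2 h) x

private lemma sum_map_pair (a : ℕ) (p : List (ℕ × ℕ)) :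
    (p.map (fun q => q.1 + q.2 * a)).sum
      = (p.map Prod.fst).sum + (p.map Prod.snd).sum * a := by
  induction p with
  | nil => simp
  | cons q p ih => simp [ih, add_mul]; ring

open List in
theorem pieri_partial_sum_estimate (a lnum : ℕ) (ha : 0 < a)
    (u δ : List ℕ)
    (hu : List.Pairwise (· ≥ ·) u)
    (hgap : ∀ i, i + 2 < u.length → u.getD (i + 2) 0 + a ≤ u.getD i 0)
    (hδlen : δ.length = u.length) (hδ : ∀ x ∈ δ, x ≤ 1) (hδsum : δ.sum = lnum) :
    ∀ d,
      ((dsort (↑(List.zipWith (fun x y => x + y * a) u δ) : Multiset ℕ)).take d).sum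
        ≤ min d lnum * a + (u.take d).sum := by
  intro d
  set v : List ℕ := List.zipWith (fun x y => x + y * a) u δ with hv
  -- dsort ↑v is a permutation of v
  have hperm : dsort (↑v : Multiset ℕ) ~ v := by
    have h1 : ((↑v : Multiset ℕ).sort (· ≤ ·)) ~ v :=
      Multiset.coe_eq_coe.mp (Multiset.sort_eq _ _)
    exact (List.reverse_perm _).trans h1
  -- the take is a subpermutation of v
  have hsub : (dsort (↑v : Multiset ℕ)).take d <+~ v :=
    (List.take_sublist d _).subperm.trans hperm.subperm
  obtain ⟨s, hsp, hssub⟩ := hsub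
  -- v as a map over the zip
  have hvmap : v = (u.zip δ).map (fun q => q.1 + q.2 * a) :=
    (List.map_uncurry_zip_eq_zipWith).symm
  rw [hvmap] at hssub
  obtain ⟨p, hp, rfl⟩ := List.sublist_map_iff.mp hssub
  -- components
  have hfst : p.map Prod.fst <+ u := by
    have := hp.map Prod.fst
    rwa [List.map_fst_zip hδlen.ge] at this
  have hsnd : p.map Prod.snd <+ δ := by
    have := hp.map Prod.snd
    rwa [List.map_snd_zip hδlen.le] at this
  -- sum of the selected u's
  have hA : (p.map Prod.fst).sum ≤ (u.take p.length).sum := by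
    simpa using sublist_sum_le_take hu hfst
  -- sum of the selected δ's
  have hB1 : (p.map Prod.snd).sum ≤ p.length := by
    have := List.sum_le_card_nsmul (p.map Prod.snd) 1
      (fun x hx => hδ x (hsnd.subset hx))
    simpa using this
  have hB2 : (p.map Prod.snd).sum ≤ lnum := by
    rw [← hδsum]
    exact hsnd.sum_le_sum (fun x _ => Nat.zero_le x)
  -- length facts
  have hlen : p.length ≤ d := by
    have h1 : (p.map (fun q => q.1 + q.2 * a)).length
        = ((dsort (↑v : Multiset ℕ)).take d).length := hsp.length_eq
    simp only [List.length_map, List.length_take] at h1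
    omega
  have htake : (u.take p.length).sum ≤ (u.take d).sum := by
    have : u.take p.length = (u.take d).take p.length := by
      rw [List.take_take, Nat.min_eq_left hlen]
    rw [this]
    exact ((u.take d).take_sublist p.length).sum_le_sum (fun x _ => Nat.zero_le x)
  -- put it together
  calc ((dsort (↑v : Multiset ℕ)).take d).sum
      = (p.map (fun q => q.1 + q.2 * a)).sum := hsp.sum_eq.symm
    _ = (p.map Prod.fst).sum + (p.map Prod.snd).sum * a := sum_map_pair a p
    _ ≤ (u.take d).sum + min d lnum * a := by
        have : (p.map Prod.snd).sum ≤ min d lnum := le_min (hB1.trans hlen) hB2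
        exact Nat.add_le_add (hA.trans htake) (Nat.mul_le_mul_right a this)
    _ = min d lnum * a + (u.take d).sum := Nat.add_comm _ _
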